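/- Let w be a binary word and let [a..b] be a maximal block of equal letters in w, i.e., w[a] = w[a+1] = ⋯ = w[b], a = 1 or w[a−1] ≠ w[a], and b = |w| or w[b+1] ≠ w[b]. Then every position i with a < i < b is a lost position of w. -/

import Mathlib

/-- The factor `w[i..j]` of `w`, with 1-based inclusive indices. -/
def factor (w : List Bool) (i j : ℕ) : List Bool :=
  (w.drop (i - 1)).take (j + 1 - i)

/-- `p` is a period of `w` (1-based: `w[k+p] = w[k]` for `1 ≤ k ≤ |w| - p`). -/
def IsPeriod (w : List Bool) (p : ℕ) : Prop :=
  1 ≤ p ∧ ∀ k, k + p < w.length → w[k]? = w[(k + p)]?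

/-- The least period of `w`. -/
noncomputable def leastPeriod (w : List Bool) : ℕ := sInf {p | IsPeriod w p}

/-- `p` is the least period of `w`. -/
def IsLeastPeriod (w : List Bool) (p : ℕ) : Prop :=
  IsPeriod w p ∧ ∀ q, IsPeriod w q → p ≤ q

/-- The lexicographic order `≺_c` on binary words in which the letter `c` is smaller. -/
def LexLt (c : Bool) : List Bool → List Bool → Prop :=
  List.Lex (fun a b => a = c ∧ b = !c)

/-- `w` is a `≺_c`-Lyndon word. -/
def IsLyndon (c : Bool) (w : List Bool) : Prop :=
  w ≠ [] ∧ ∀ u v : List Bool, u ≠ [] → v ≠ [] → w = u ++ v →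
    w ≠ v ++ u ∧ LexLt c w (v ++ u)

/-- `w` is primitive: it is not a power of a shorter word. -/
def Primitive (w : List Bool) : Prop :=
  w ≠ [] ∧ ∀ (u : List Bool) (k : ℕ), u.length < w.length → w ≠ (List.replicate k u).flatten

/-- `w` and `w'` are conjugate words. -/
def Conjugate (w w' : List Bool) : Prop := ∃ u v, w = u ++ v ∧ w' = v ++ u

/-- The interval `[i..j]` (1-based) is a run of `w`. -/
def IsRun (w : List Bool) (i j : ℕ) : Prop :=
  1 ≤ i ∧ i < j ∧ j ≤ w.length ∧
  2 * leastPeriod (factor w i j) ≤ j - i + 1 ∧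
  (i = 1 ∨ w[(i - 2)]? ≠ w[(i - 2 + leastPeriod (factor w i j))]?) ∧
  (j = w.length ∨ w[j]? ≠ w[(j - leastPeriod (factor w i j))]?)

/-- `c_w(i)`: the letter different from `w[i-1]` (1-based). -/
def cpar (w : List Bool) (i : ℕ) : Bool := !(w.getD (i - 2) false)

/-- `L_w(i)`: the largest `j` such that `w[i..j]` is `≺_{c_w(i)}`-Lyndon. -/
noncomputable def Lpar (w : List Bool) (i : ℕ) : ℕ :=
  sSup {j | j ≤ w.length ∧ IsLyndon (cpar w i) (factor w i j)}

/-- `D_w(i) = L_w(i) - i + 1`. -/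
noncomputable def Dpar (w : List Bool) (i : ℕ) : ℕ := Lpar w i + 1 - i

/-- `ST_w(i)`: the least `j` such that `D_w(i)` is a period of `w[j..L_w(i)]`. -/
noncomputable def STpar (w : List Bool) (i : ℕ) : ℕ :=
  sInf {j | 1 ≤ j ∧ IsPeriod (factor w j (Lpar w i)) (Dpar w i)}

/-- `E_w(i)`: the largest `j` such that `D_w(i)` is a period of `w[i..j]`. -/
noncomputable def Epar (w : List Bool) (i : ℕ) : ℕ :=
  sSup {j | j ≤ w.length ∧ IsPeriod (factor w i j) (Dpar w i)}

/-- `R_w(i) = [ST_w(i)..E_w(i)]`. -/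
noncomputable def Rmap (w : List Bool) (i : ℕ) : ℕ × ℕ := (STpar w i, Epar w i)

/-- `r_w(c)` for the run `[s..e]`: the least `i` with `R_w(i) = [s..e]` and
`w[i..L_w(i)]` a `≺_c`-Lyndon word. -/
noncomputable def rpar (w : List Bool) (s e : ℕ) (c : Bool) : ℕ :=
  sInf {i | Rmap w i = (s, e) ∧ IsLyndon c (factor w i (Lpar w i))}

/-- `f_w([s..e])`: the letter `c` with `r_w(c) ≥ r_w(c̄)` (`0` if the least period is one). -/
noncomputable def fpar (w : List Bool) (s e : ℕ) : Bool :=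
  if leastPeriod (factor w s e) = 1 then false
  else if rpar w s e false ≤ rpar w s e true then true else false

/-- The position `i` (1-based, `1 < i ≤ |w|`) is lost in `w`. -/
def Lost (w : List Bool) (i : ℕ) : Prop :=
  1 < i ∧ i ≤ w.length ∧
  ((Epar w i < w.length ∧ 1 < STpar w i ∧ ¬ IsRun w (STpar w i) (Epar w i)) ∨
   (Epar w i < w.length ∧ IsRun w (STpar w i) (Epar w i) ∧ i + Dpar w i ≤ Epar w i) ∨
   (Epar w i = w.length ∧ IsRun w (STpar w i) (Epar w i) ∧ i + Dpar w i ≤ Epar w i ∧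
     STpar w i < i ∧
     IsLyndon (fpar w (STpar w i) (Epar w i)) (factor w i (Lpar w i))))

/-- The number of lost positions of `w` that are `≤ p`. -/
noncomputable def lostCount (w : List Bool) (p : ℕ) : ℕ := {q | Lost w q ∧ q ≤ p}.ncard

/-- The prefix-frequency predicate `P_d(w)`: every lost position `p` of `w`, being the
`j`-th lost position, satisfies `p - 1 ≥ j·d`. -/
def Pd (d : ℝ) (w : List Bool) : Prop :=
  ∀ p, Lost w p → (lostCount w p : ℝ) * d ≤ (p : ℝ) - 1

/-- The number of runs of `w`. -/
noncomputable def numRuns (w : List Bool) : ℕ := {ij : ℕ × ℕ | IsRun w ij.1 ij.2}.ncard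

/-- `ρ(n)`: the maximal number of runs in a binary word of length `n`. -/
noncomputable def rho (n : ℕ) : ℕ := sSup {k | ∃ w : List Bool, w.length = n ∧ numRuns w = k}

/-- The golden ratio. -/
noncomputable def goldenRatio' : ℝ := (1 + Real.sqrt 5) / 2

lemma factor_get? (w : List Bool) (i j k : ℕ) (h : k < j + 1 - i) :
    (factor w i j)[k]? = w[(i - 1 + k)]? := by
  unfold factor
  rw [List.getElem?_take_of_lt h, List.getElem?_drop]

lemma factor_length (w : List Bool) (i j : ℕ) :
    (factor w i j).length = min (j + 1 - i) (w.length - (i - 1)) := by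
  unfold factor
  rw [List.length_take, List.length_drop]

lemma factor_self (w : List Bool) (i : ℕ) (x : Bool) (h : w[(i - 1)]? = some x) :
    factor w i i = [x] := by
  unfold factor
  have h0 : (w.drop (i - 1))[0]? = some x := by rw [List.getElem?_drop]; simpa using h
  rcases hd : w.drop (i - 1) with _ | ⟨y, t⟩
  · rw [hd] at h0; simp at h0
  · rw [hd] at h0
    simp at h0
    rw [show i + 1 - i = 1 by omega]
    simp [h0]

lemma isLyndon_singleton (c x : Bool) : IsLyndon c [x] := by
  refine ⟨by simp, fun u v hu hv huv => ?_⟩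
  exfalso
  have h1 : 1 ≤ u.length := List.length_pos_iff.2 hu
  have h2 : 1 ≤ v.length := List.length_pos_iff.2 hv
  have := congrArg List.length huv
  simp [List.length_append] at this
  omega

lemma not_isLyndon_cons (x : Bool) (t : List Bool) (hne : t ≠ []) :
    ¬ IsLyndon (!x) (x :: t) := by
  rintro ⟨-, hL⟩
  by_cases hall : ∀ z ∈ t, z = x
  · have ht : t = List.replicate t.length x := List.eq_replicate_length.2 hall
    have := (hL [x] t (by simp) hne (by simp)).1
    apply this
    rw [show (x :: t : List Bool) = List.replicate (t.length + 1) x by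
      rw [List.replicate_succ]; congr 1]
    rw [List.replicate_succ']
    congr 1
    exact ht.symm
  · push_neg at hall
    obtain ⟨z, hz, hzx⟩ := hall
    have hz' : z = !x := by cases z <;> cases x <;> simp_all
    subst hz'
    obtain ⟨t₁, t₂, rfl⟩ := List.mem_iff_append.1 hz
    have hlex := (hL (x :: t₁) ((!x) :: t₂) (by simp) (by simp) (by simp)).2
    unfold LexLt at hlex
    cases x <;> (cases hlex with | rel h => simp at h)

lemma not_isLyndon_of (u : List Bool) (x : Bool)
    (h0 : u[0]? = some x) (hlen : 2 ≤ u.length) : ¬ IsLyndon (!x) u := by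
  rcases u with _ | ⟨y, t⟩
  · simp at h0
  · have hy : y = x := by simpa using h0
    subst hy
    apply not_isLyndon_cons
    intro h
    rw [h] at hlen
    simp at hlen

/-- Every inner position of a maximal block of equal letters is lost. -/
theorem inner_block_positions_lost (w : List Bool) (a b : ℕ)
    (ha : 1 ≤ a) (hb : b ≤ w.length)
    (hblock : ∀ m, a ≤ m → m ≤ b → w[(m - 1)]? = w[(a - 1)]?)
    (hleft : a = 1 ∨ w[(a - 2)]? ≠ w[(a - 1)]?)
    (hright : b = w.length ∨ w[b]? ≠ w[(b - 1)]?) :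
    ∀ i, a < i → i < b → Lost w i := by
  intro i hai hib
  have h2i : 2 ≤ i := by omega
  obtain ⟨x, hx⟩ : ∃ x, w[(a - 1)]? = some x := by
    rcases h : w[(a - 1)]? with _ | x
    · rw [List.getElem?_eq_none_iff] at h; omega
    · exact ⟨x, rfl⟩
  have hpos : ∀ m, a ≤ m → m ≤ b → w[(m - 1)]? = some x :=
    fun m h1 h2 => (hblock m h1 h2).trans hx
  have hc : cpar w i = !x := by
    have h1 : w[(i - 2)]? = some x := by
      have := hpos (i - 1) (by omega) (by omega)
      rwa [show i - 1 - 1 = i - 2 by omega] at this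
    unfold cpar
    rw [show w.getD (i - 2) false = (w[(i - 2)]?).getD false from rfl, h1]; rfl
  have hfs : factor w i i = [x] := factor_self w i x (hpos i (by omega) (by omega))
  have hiT : i ∈ {j | j ≤ w.length ∧ IsLyndon (cpar w i) (factor w i j)} := by
    refine ⟨by omega, ?_⟩
    rw [hfs]; exact isLyndon_singleton _ _
  have huniq : ∀ j ∈ {j | j ≤ w.length ∧ IsLyndon (cpar w i) (factor w i j)}, j = i := by
    rintro j ⟨hjw, hLyn⟩
    by_contra hne
    rcases Nat.lt_or_ge j i with hji | hji
    · apply hLyn.1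
      unfold factor
      rw [show j + 1 - i = 0 by omega]
      simp
    · have hji' : i < j := by omega
      have h0 : (factor w i j)[0]? = some x := by
        rw [factor_get? w i j 0 (by omega)]
        simpa using hpos i (by omega) (by omega)
      have hlen : 2 ≤ (factor w i j).length := by
        rw [factor_length]; omega
      rw [hc] at hLyn
      exact not_isLyndon_of _ x h0 hlen hLyn
  have hL : Lpar w i = i := by
    unfold Lpar
    exact le_antisymm (csSup_le ⟨i, hiT⟩ fun j hj => (huniq j hj).le)
      (le_csSup ⟨w.length, fun j hj => hj.1⟩ hiT)
  have hD : Dpar w i = 1 := by unfold Dpar; rw [hL]; omega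
  have hper : ∀ s e, a ≤ s → e ≤ b → IsPeriod (factor w s e) 1 := by
    intro s e hs he
    refine ⟨le_rfl, fun k hk => ?_⟩
    rw [factor_length] at hk
    have hk1 : k + 1 < e + 1 - s := lt_of_lt_of_le hk (min_le_left _ _)
    rw [factor_get? w s e k (by omega), factor_get? w s e (k + 1) (by omega)]
    rw [show s - 1 + k = (s + k) - 1 by omega, show s - 1 + (k + 1) = (s + k + 1) - 1 by omega]
    rw [hpos (s + k) (by omega) (by omega), hpos (s + k + 1) (by omega) (by omega)]
  have hST : STpar w i = a := by
    unfold STpar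
    rw [hL, hD]
    refine le_antisymm (Nat.sInf_le ⟨ha, hper a i le_rfl (by omega)⟩) ?_
    refine le_csInf ⟨a, ha, hper a i le_rfl (by omega)⟩ ?_
    rintro j ⟨hj1, hjp⟩
    by_contra hja
    push_neg at hja
    have hne : w[(a - 2)]? ≠ w[(a - 1)]? := by
      rcases hleft with h | h
      · omega
      · exact h
    apply hne
    have hlen2 : a - 1 - j + 1 < (factor w j i).length := by rw [factor_length]; omega
    have h2 := hjp.2 (a - 1 - j) hlen2
    rw [factor_get? w j i _ (by omega), factor_get? w j i _ (by omega)] at h2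
    rw [show j - 1 + (a - 1 - j) = a - 2 by omega,
      show j - 1 + (a - 1 - j + 1) = a - 1 by omega] at h2
    exact h2
  have hE : Epar w i = b := by
    unfold Epar
    rw [hD]
    have hbm : b ∈ {j | j ≤ w.length ∧ IsPeriod (factor w i j) 1} :=
      ⟨hb, hper i b (by omega) le_rfl⟩
    refine le_antisymm (csSup_le ⟨b, hbm⟩ ?_) (le_csSup ⟨w.length, fun j hj => hj.1⟩ hbm)
    rintro j ⟨hjw, hjp⟩
    by_contra hjb
    push_neg at hjb
    have hne : w[b]? ≠ w[(b - 1)]? := by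
      rcases hright with h | h
      · omega
      · exact h
    apply hne
    have hlen2 : b - i + 1 < (factor w i j).length := by rw [factor_length]; omega
    have h2 := hjp.2 (b - i) hlen2
    rw [factor_get? w i j _ (by omega), factor_get? w i j _ (by omega)] at h2
    rw [show i - 1 + (b - i) = b - 1 by omega, show i - 1 + (b - i + 1) = b by omega] at h2
    exact h2.symm
  have hlp : leastPeriod (factor w a b) = 1 := by
    unfold leastPeriod
    refine le_antisymm (Nat.sInf_le (hper a b le_rfl le_rfl)) ?_
    exact le_csInf ⟨1, hper a b le_rfl le_rfl⟩ fun p hp => hp.1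
  have hrun : IsRun w a b := by
    refine ⟨ha, by omega, hb, ?_, ?_, ?_⟩
    · rw [hlp]; omega
    · rcases hleft with h | h
      · exact Or.inl h
      · by_cases ha1 : a = 1
        · exact Or.inl ha1
        · right
          rw [hlp, show a - 2 + 1 = a - 1 by omega]
          exact h
    · rcases hright with h | h
      · exact Or.inl h
      · right
        rw [hlp]
        exact h
  refine ⟨by omega, by omega, ?_⟩
  rcases Nat.eq_or_lt_of_le hb with hbeq | hblt
  · right; right
    rw [hE, hST, hD, hL, hfs]
    exact ⟨hbeq, hrun, by omega, by omega, isLyndon_singleton _ _⟩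
  · right; left
    rw [hE, hST, hD]
    exact ⟨hblt, hrun, by omega⟩
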